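/- Suppose V: [0,∞) → [0,∞) is a piecewise absolutely continuous function such that on each inter-switch interval V̇(t) ≤ -(α/ā) V(t), and at each switching time t_k, V(t_k) ≤ μ·lim_{t→t_k⁻} V(t), where μ ≥ 1, α > 0, ā > 0. If the switching times have average dwell-time τ_a > ā·ln(μ)/α with chatter bound N_0, then V(t) ≤ μ^{N_0} e^{-λ t} V(0) for all t ≥ 0, where λ = α/ā − ln(μ)/τ_a > 0. -/

import Mathlib

/-- If `V : [0,∞) → [0,∞)` satisfies `V̇ ≤ -(α/ā) V` between switching times,
jumps by at most a factor `μ ≥ 1` at each switching time (w.r.t. the left limit), and the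
switching times `tk` have average dwell-time `τa > ā ln μ / α` with chatter bound `N0`, then
`V t ≤ μ^{N0} e^{-λ t} V 0` for all `t ≥ 0`, where `λ = α/ā − ln μ / τa > 0`. -/
theorem multiple_lyapunov_decay
    (V : ℝ → ℝ) (tk : ℕ → ℝ) (α abar μ τa N0 : ℝ)
    (hα : 0 < α) (habar : 0 < abar) (hμ : 1 ≤ μ) (hN0 : 0 < N0)
    (hτa : τa > abar * Real.log μ / α)
    (hVnonneg : ∀ t, 0 ≤ t → 0 ≤ V t)
    (htk : StrictMono tk) (htk0 : 0 < tk 0)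
    -- `V` is right-continuous and differentiable off the switching times, with decay
    (hVcont : ∀ t, 0 ≤ t → ContinuousWithinAt V (Set.Ici t) t)
    (hdecay : ∀ t, 0 < t → t ∉ Set.range tk →
      ∃ v : ℝ, HasDerivAt V v t ∧ v ≤ -(α / abar) * V t)
    -- jump condition at each switching time via the left limit
    (hjump : ∀ k : ℕ, ∃ Vleft : ℝ,
      Filter.Tendsto V (nhdsWithin (tk k) (Set.Iio (tk k))) (nhds Vleft) ∧
      V (tk k) ≤ μ * Vleft)
    -- average dwell-time property of the switching times
    (hADT : ∀ s t : ℝ, 0 ≤ s → s ≤ t →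
      (({k : ℕ | tk k ∈ Set.Ioo s t}.ncard : ℝ) ≤ N0 + (t - s) / τa)) :
    0 < α / abar - Real.log μ / τa ∧
    ∀ t, 0 ≤ t →
      V t ≤ μ ^ (N0 : ℝ) * Real.exp (-(α / abar - Real.log μ / τa) * t) * V 0 := by
  classical
  set β : ℝ := α / abar with hβdef
  have hβ : 0 < β := div_pos hα habar
  have hμ0 : (0:ℝ) < μ := lt_of_lt_of_le one_pos hμ
  have hlogμ : 0 ≤ Real.log μ := Real.log_nonneg hμ
  -- Finiteness of switches in any bounded interval
  have hfin : ∀ s t : ℝ, 0 ≤ s → {k : ℕ | tk k ∈ Set.Ioo s t}.Finite := by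
    intro s t hs
    by_contra hinf
    have hinf' : {k : ℕ | tk k ∈ Set.Ioo s t}.Infinite := hinf
    obtain ⟨k₀, hk₀⟩ := hinf'.nonempty
    have hbound : ∀ m : ℕ, (m : ℝ) ≤ N0 + (t - s) / |τa| := by
      intro m
      obtain ⟨k'', hk''mem, hk''gt⟩ := hinf'.exists_gt (k₀ + m)
      have h1 : s < tk k₀ ∧ tk k₀ < t := hk₀
      have htm : tk (k₀ + m) < t := lt_trans (htk hk''gt) hk''mem.2
      have hts : s < tk (k₀ + m) := lt_of_lt_of_le h1.1 (htk.monotone (Nat.le_add_right _ _))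
      have hsub : Set.Ico k₀ (k₀ + m) ⊆ {k : ℕ | tk k ∈ Set.Ioo s (tk (k₀ + m))} := by
        intro k hk
        exact ⟨lt_of_lt_of_le h1.1 (htk.monotone hk.1), htk hk.2⟩
      have hfinS : {k : ℕ | tk k ∈ Set.Ioo s (tk (k₀ + m))}.Finite := by
        apply Set.Finite.subset (Set.finite_Iio (k₀ + m))
        intro k hk
        exact htk.lt_iff_lt.mp hk.2
      have hcard : m ≤ {k : ℕ | tk k ∈ Set.Ioo s (tk (k₀ + m))}.ncard := by
        have h1 : (Set.Ico k₀ (k₀ + m)).ncard = m := by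
          rw [show Set.Ico k₀ (k₀ + m) = ↑(Finset.Ico k₀ (k₀ + m)) by ext x; simp]
          rw [Set.ncard_coe_finset, Nat.card_Ico]
          omega
        have h6 := Set.ncard_le_ncard hsub hfinS
        omega
      have h3 := hADT s (tk (k₀ + m)) hs hts.le
      have h4 : (tk (k₀ + m) - s) / τa ≤ (t - s) / |τa| := by
        calc (tk (k₀ + m) - s) / τa ≤ |(tk (k₀ + m) - s) / τa| := le_abs_self _
          _ = |tk (k₀ + m) - s| / |τa| := abs_div _ _
          _ = (tk (k₀ + m) - s) / |τa| := by rw [abs_of_pos (by linarith)]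
          _ ≤ (t - s) / |τa| := by
              rcases eq_or_lt_of_le (abs_nonneg τa) with h | h
              · rw [← h]; simp
              · apply div_le_div_of_nonneg_right (by linarith) h.le
      have h5 : (m : ℝ) ≤ ({k : ℕ | tk k ∈ Set.Ioo s (tk (k₀ + m))}.ncard : ℝ) := by
        exact_mod_cast hcard
      linarith
    obtain ⟨m, hm⟩ := exists_nat_gt (N0 + (t - s) / |τa|)
    linarith [hbound m]
  -- switching times are unbounded
  have hub : ∀ T : ℝ, ∃ k, T < tk k := by
    intro T
    by_contra h
    push_neg at h
    have huniv : {k : ℕ | tk k ∈ Set.Ioo 0 (T + 1)} = Set.univ := by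
      apply Set.eq_univ_of_forall
      intro k
      exact ⟨lt_of_lt_of_le htk0 (htk.monotone (Nat.zero_le k)), by linarith [h k]⟩
    have := hfin 0 (T + 1) le_rfl
    rw [huniv] at this
    exact Set.infinite_univ this
  -- Gronwall-type decay on switch-free intervals
  have hL1 : ∀ a c : ℝ, 0 ≤ a → a ≤ c → (∀ x ∈ Set.Ioc a c, x ∉ Set.range tk) →
      V c * Real.exp (β * c) ≤ V a * Real.exp (β * a) := by
    intro a c ha hac hfree
    have hkey : ∀ x ∈ Set.Ioo a c, ∃ g', HasDerivAt (fun y => V y * Real.exp (β * y)) g' x ∧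
        g' ≤ 0 := by
      intro x hx
      have hx0 : 0 < x := lt_of_le_of_lt ha hx.1
      obtain ⟨v, hv, hvle⟩ := hdecay x hx0 (hfree x ⟨hx.1, hx.2.le⟩)
      have hE : HasDerivAt (fun y => Real.exp (β * y)) (Real.exp (β * x) * (β * 1)) x :=
        ((hasDerivAt_id x).const_mul β).exp
      refine ⟨_, hv.mul hE, ?_⟩
      have hEpos := Real.exp_pos (β * x)
      have h1 : v + β * V x ≤ 0 := by rw [hβdef]; linarith
      nlinarith [mul_nonpos_of_nonpos_of_nonneg h1 hEpos.le]
    have hcont : ContinuousOn (fun x => V x * Real.exp (β * x)) (Set.Icc a c) := by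
      apply ContinuousOn.mul ?_ (Continuous.continuousOn (by continuity))
      intro x hx
      rcases eq_or_lt_of_le hx.1 with h | h
      · rw [← h]
        exact (hVcont a ha).mono (Set.Icc_subset_Ici_self)
      · have hx0 : 0 < x := lt_of_le_of_lt ha h
        obtain ⟨v, hv, _⟩ := hdecay x hx0 (hfree x ⟨h, hx.2⟩)
        exact hv.continuousAt.continuousWithinAt
    have hanti : AntitoneOn (fun x => V x * Real.exp (β * x)) (Set.Icc a c) := by
      apply antitoneOn_of_deriv_nonpos (convex_Icc a c) hcont
      · intro x hx
        rw [interior_Icc] at hx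
        obtain ⟨g', hg', _⟩ := hkey x hx
        exact hg'.differentiableAt.differentiableWithinAt
      · intro x hx
        rw [interior_Icc] at hx
        obtain ⟨g', hg', hle⟩ := hkey x hx
        rw [hg'.deriv]
        exact hle
    exact hanti ⟨le_rfl, hac⟩ ⟨hac, le_rfl⟩ hac
  -- jump bound via left limit
  have hL2 : ∀ (n : ℕ) (s C : ℝ), s < tk n →
      (∀ x ∈ Set.Ioo s (tk n), V x * Real.exp (β * x) ≤ C) →
      V (tk n) * Real.exp (β * tk n) ≤ μ * C := by
    intro n s C hs hC
    obtain ⟨Vl, hVl, hjmp⟩ := hjump n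
    have hWl : Filter.Tendsto (fun x => V x * Real.exp (β * x))
        (nhdsWithin (tk n) (Set.Iio (tk n))) (nhds (Vl * Real.exp (β * tk n))) := by
      apply hVl.mul
      exact ((Real.continuous_exp.comp (continuous_const.mul continuous_id)).continuousAt).continuousWithinAt
    have hmem : Set.Ioo s (tk n) ∈ nhdsWithin (tk n) (Set.Iio (tk n)) :=
      Ioo_mem_nhdsLT_of_mem ⟨hs, le_rfl⟩
    have hVlle : Vl * Real.exp (β * tk n) ≤ C :=
      le_of_tendsto hWl (Filter.eventually_of_mem hmem hC)
    have hEpos := Real.exp_pos (β * tk n)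
    calc V (tk n) * Real.exp (β * tk n) ≤ (μ * Vl) * Real.exp (β * tk n) := by nlinarith
      _ = μ * (Vl * Real.exp (β * tk n)) := by ring
      _ ≤ μ * C := mul_le_mul_of_nonneg_left hVlle hμ0.le
  -- main induction
  have hkey : ∀ n : ℕ, ∀ t : ℝ, 0 ≤ t → (∀ k, tk k ≤ t ↔ k < n) →
      V t * Real.exp (β * t) ≤ μ ^ n * V 0 := by
    intro n
    induction n with
    | zero =>
      intro t ht hcond
      have hfree : ∀ x ∈ Set.Ioc (0:ℝ) t, x ∉ Set.range tk := by
        rintro x hx ⟨k, hk⟩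
        exact absurd ((hcond k).1 (hk ▸ hx.2)) (Nat.not_lt_zero k)
      have := hL1 0 t le_rfl ht hfree
      simpa using this
    | succ n ih =>
      intro t ht hcond
      have htkn : tk n ≤ t := (hcond n).mpr (Nat.lt_succ_self n)
      have htknpos : 0 < tk n := lt_of_lt_of_le htk0 (htk.monotone (Nat.zero_le n))
      obtain ⟨s, hs0, hslt, hsk⟩ : ∃ s, 0 ≤ s ∧ s < tk n ∧ ∀ k < n, tk k ≤ s := by
        cases n with
        | zero => exact ⟨0, le_rfl, htk0, fun k hk => absurd hk (Nat.not_lt_zero k)⟩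
        | succ m =>
          exact ⟨tk m, (lt_of_lt_of_le htk0 (htk.monotone (Nat.zero_le m))).le,
            htk (Nat.lt_succ_self m), fun k hk => htk.monotone (Nat.lt_succ_iff.mp hk)⟩
      have hIH : ∀ x ∈ Set.Ioo s (tk n), V x * Real.exp (β * x) ≤ μ ^ n * V 0 := by
        intro x hx
        refine ih x (le_trans hs0 hx.1.le) (fun k => ⟨?_, ?_⟩)
        · intro hkx
          by_contra hkn
          push_neg at hkn
          have : tk n ≤ tk k := htk.monotone hkn
          linarith [hx.2]
        · intro hkn
          exact le_trans (hsk k hkn) hx.1.le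
      have hWtkn : V (tk n) * Real.exp (β * tk n) ≤ μ * (μ ^ n * V 0) :=
        hL2 n s _ hslt hIH
      have hfree : ∀ x ∈ Set.Ioc (tk n) t, x ∉ Set.range tk := by
        rintro x hx ⟨k, hk⟩
        have h1 : tk k ≤ t := hk ▸ hx.2
        have h2 : k < n + 1 := (hcond k).1 h1
        have h3 : tk k ≤ tk n := htk.monotone (Nat.lt_succ_iff.mp h2)
        have := hx.1
        rw [← hk] at this
        linarith
      calc V t * Real.exp (β * t) ≤ V (tk n) * Real.exp (β * tk n) :=
            hL1 (tk n) t htknpos.le htkn hfree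
        _ ≤ μ * (μ ^ n * V 0) := hWtkn
        _ = μ ^ (n + 1) * V 0 := by ring
  -- positivity of the decay rate
  have hlampos : 0 < β - Real.log μ / τa := by
    rcases eq_or_lt_of_le hlogμ with h0 | hpos
    · rw [← h0, zero_div, sub_zero]; exact hβ
    · have hτpos : 0 < τa := lt_trans (by positivity) hτa
      have h1 : abar * Real.log μ < τa * α := (div_lt_iff₀ hα).mp hτa
      have h2 : Real.log μ / τa < α / abar := by
        rw [div_lt_div_iff₀ hτpos habar]
        nlinarith
      rw [hβdef]
      linarith
  refine ⟨hlampos, ?_⟩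
  intro t ht
  obtain ⟨K, hK⟩ := hub t
  have hex : ∃ k, t < tk k := ⟨K, hK⟩
  set n := Nat.find hex with hn
  have hcond : ∀ k, tk k ≤ t ↔ k < n := by
    intro k
    constructor
    · intro hkt
      by_contra hkn
      push_neg at hkn
      have h1 : t < tk n := Nat.find_spec hex
      have h2 : tk n ≤ tk k := htk.monotone hkn
      linarith
    · intro hkn
      have := Nat.find_min hex hkn
      push_neg at this
      exact this
  have hint := hkey n t ht hcond
  have hV0 := hVnonneg 0 le_rfl
  -- bound μ^n by μ^{N0} e^{(log μ / τa) t}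
  have hexp : μ ^ n ≤ μ ^ (N0 : ℝ) * Real.exp (Real.log μ / τa * t) := by
    rcases eq_or_lt_of_le hlogμ with h0 | hpos
    · have hμ1 : μ = 1 := by
        have := Real.exp_log hμ0
        rw [← h0] at this
        rw [← this, Real.exp_zero]
      simp [hμ1]
    · have hτpos : 0 < τa := lt_trans (by positivity) hτa
      have hADTn : (n : ℝ) ≤ N0 + t / τa := by
        rw [← sub_nonneg]
        by_contra hneg
        push_neg at hneg
        set ε : ℝ := ((n : ℝ) - (N0 + t / τa)) / 2 with hεdef
        have hε : 0 < ε := by simp only [hεdef]; linarith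
        have hε' : 0 < ε * τa := mul_pos hε hτpos
        have hsub : Set.Iio n ⊆ {k : ℕ | tk k ∈ Set.Ioo 0 (t + ε * τa)} := by
          intro k hk
          have h1 := (hcond k).mpr hk
          exact ⟨lt_of_lt_of_le htk0 (htk.monotone (Nat.zero_le k)), by linarith⟩
        have hfinS := hfin 0 (t + ε * τa) le_rfl
        have h1 : (Set.Iio n).ncard ≤ {k : ℕ | tk k ∈ Set.Ioo 0 (t + ε * τa)}.ncard :=
          Set.ncard_le_ncard hsub hfinS
        have h2 : (Set.Iio n).ncard = n := by
          rw [show Set.Iio n = ↑(Finset.range n) by ext x; simp]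
          rw [Set.ncard_coe_finset, Finset.card_range]
        have h3 := hADT 0 (t + ε * τa) le_rfl (by linarith)
        have h4 : (n : ℝ) ≤ N0 + (t + ε * τa - 0) / τa := by
          calc (n : ℝ) = ((Set.Iio n).ncard : ℝ) := by rw [h2]
            _ ≤ ({k : ℕ | tk k ∈ Set.Ioo 0 (t + ε * τa)}.ncard : ℝ) := by exact_mod_cast h1
            _ ≤ N0 + (t + ε * τa - 0) / τa := h3
        have h5 : (t + ε * τa - 0) / τa = t / τa + ε := by field_simp; ring
        rw [h5] at h4
        simp only [hεdef] at h4
        linarith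
      calc μ ^ n = μ ^ ((n : ℕ) : ℝ) := (Real.rpow_natCast μ n).symm
        _ ≤ μ ^ (N0 + t / τa) := Real.rpow_le_rpow_of_exponent_le hμ hADTn
        _ = μ ^ (N0 : ℝ) * μ ^ (t / τa) := Real.rpow_add hμ0 _ _
        _ = μ ^ (N0 : ℝ) * Real.exp (Real.log μ / τa * t) := by
            congr 1
            rw [Real.rpow_def_of_pos hμ0]
            congr 1
            ring
  have hEpos := Real.exp_pos (β * t)
  have hWbound : V t * Real.exp (β * t) ≤
      (μ ^ (N0 : ℝ) * Real.exp (Real.log μ / τa * t)) * V 0 :=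
    le_trans hint (mul_le_mul_of_nonneg_right hexp hV0)
  have hid : V t = (V t * Real.exp (β * t)) * Real.exp (-(β * t)) := by
    rw [mul_assoc, ← Real.exp_add]
    simp
  rw [hid]
  calc (V t * Real.exp (β * t)) * Real.exp (-(β * t))
      ≤ ((μ ^ (N0 : ℝ) * Real.exp (Real.log μ / τa * t)) * V 0) * Real.exp (-(β * t)) :=
        mul_le_mul_of_nonneg_right hWbound (Real.exp_pos _).le
    _ = μ ^ (N0 : ℝ) * (Real.exp (Real.log μ / τa * t) * Real.exp (-(β * t))) * V 0 := by ring
    _ = μ ^ (N0 : ℝ) * Real.exp (-(β - Real.log μ / τa) * t) * V 0 := by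
        rw [← Real.exp_add, show Real.log μ / τa * t + -(β * t) = -(β - Real.log μ / τa) * t by ring]
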